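/- Let NF_n be the n-dimensional null-filiform Leibniz algebra with basis e_1,…,e_n and multiplication [e_i,e_1] = e_{i+1} for 1 ≤ i ≤ n−1 (all other basis products zero). A linear map D : NF_n → NF_n is an anti-derivation if and only if D(e_i) = 0 for all 2 ≤ i ≤ n (with D(e_1) arbitrary). -/
import Mathlib

/-- The bracket of the null-filiform Leibniz algebra `NF_n`:
`[e_i, e_1] = e_{i+1}` (here `e_i` is `Pi.single (i-1) 1`). -/
def NFbr (n : ℕ) (x y : Fin n → ℂ) : Fin n → ℂ := fun i =>
  if _ : 1 ≤ (i : ℕ) then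
    y ⟨0, Nat.lt_of_le_of_lt (Nat.zero_le _) i.isLt⟩ *
      x ⟨(i : ℕ) - 1, Nat.lt_of_le_of_lt (Nat.sub_le _ _) i.isLt⟩
  else 0

lemma NFbr_single (n k : ℕ) (hk : k + 1 < n) :
    NFbr n (Pi.single ⟨k, Nat.lt_of_succ_lt hk⟩ 1)
      (Pi.single ⟨0, Nat.lt_of_le_of_lt (Nat.zero_le _) hk⟩ 1) =
      Pi.single ⟨k + 1, hk⟩ 1 := by
  funext i
  simp only [NFbr, Pi.single_apply]
  split_ifs with h h1 h2 h3 h4 <;>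
    simp_all [Fin.ext_iff] <;> omega

/-- a linear map `D` on `NF_n` is an anti-derivation iff it kills
`e_2, …, e_n` (its value on `e_1` being arbitrary). -/
theorem NF_antiderivation_characterization (n : ℕ)
    (D : (Fin n → ℂ) →ₗ[ℂ] (Fin n → ℂ)) :
    (∀ x y : Fin n → ℂ, D (NFbr n x y) = NFbr n (D x) y - NFbr n (D y) x) ↔
    (∀ i : Fin n, 1 ≤ (i : ℕ) → D (Pi.single i 1) = 0) := by
  constructor
  · intro hD
    have key : ∀ k (hk : k < n), 1 ≤ k → D (Pi.single ⟨k, hk⟩ 1) = 0 := by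
      intro k
      induction k with
      | zero => intro hk h1; omega
      | succ m ih =>
        intro hk _
        have hb := hD (Pi.single ⟨m, Nat.lt_of_succ_lt hk⟩ 1)
          (Pi.single ⟨0, Nat.lt_of_le_of_lt (Nat.zero_le _) hk⟩ 1)
        rw [NFbr_single n m hk] at hb
        rcases Nat.eq_zero_or_pos m with hm | hm
        · subst hm
          simpa using hb
        · rw [ih (Nat.lt_of_succ_lt hk) hm] at hb
          rw [hb]
          have h1 : NFbr n 0 (Pi.single ⟨0, Nat.lt_of_le_of_lt (Nat.zero_le _) hk⟩ 1) = 0 := by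
            funext i; simp only [NFbr]; split_ifs <;> simp
          have h2 : NFbr n (D (Pi.single ⟨0, Nat.lt_of_le_of_lt (Nat.zero_le _) hk⟩ 1))
              (Pi.single ⟨m, Nat.lt_of_succ_lt hk⟩ 1) = 0 := by
            funext i; simp only [NFbr]; split_ifs with h
            · rw [Pi.single_apply,
                if_neg (by simp only [Fin.mk.injEq]; omega), zero_mul]
              simp
            · rfl
          rw [h1, h2, sub_zero]
    intro i hi
    have := key i i.isLt hi
    simpa using this
  · intro hD x y
    rcases Nat.eq_zero_or_pos n with hn | hn
    · subst hn; funext i; exact i.elim0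
    set z0 : Fin n := ⟨0, hn⟩ with hz0
    have hDx : ∀ z : Fin n → ℂ, D z = z z0 • D (Pi.single z0 1) := by
      intro z
      have hz : z = ∑ i : Fin n, z i • (Pi.single i 1 : Fin n → ℂ) := by
        funext j
        rw [Finset.sum_apply]
        simp [Pi.single_apply, mul_comm]
      calc D z = D (∑ i : Fin n, z i • (Pi.single i 1 : Fin n → ℂ)) := by rw [← hz]
        _ = ∑ i : Fin n, z i • D (Pi.single i 1) := by rw [map_sum]; simp only [map_smul]
        _ = z z0 • D (Pi.single z0 1) := by
            refine Finset.sum_eq_single z0 (fun b _ hb => ?_) (fun h => (h (Finset.mem_univ z0)).elim)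
            rcases Nat.eq_zero_or_pos (b : ℕ) with h | h
            · exact absurd (Fin.ext h) hb
            · rw [hD b h, smul_zero]
    have hL : D (NFbr n x y) = 0 := by
      rw [hDx (NFbr n x y)]
      have : NFbr n x y z0 = 0 := dif_neg (Nat.not_succ_le_zero 0)
      rw [this, zero_smul]
    rw [hL]
    funext i
    simp only [Pi.sub_apply, NFbr]
    split_ifs with h
    · rw [hDx x, hDx y]
      have hz : (⟨0, Nat.lt_of_le_of_lt (Nat.zero_le _) i.isLt⟩ : Fin n) = z0 := rfl
      simp only [Pi.smul_apply, smul_eq_mul, Pi.zero_apply, hz]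
      ring
    · simp
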